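/- arXiv:math/9906091 — 3 statements merged into one kernel-verified Lean document; each statement's English description precedes it below -/
import Mathlib

section
/- The kernel of ψ is the principal ideal generated by Z³ − X·Y², and the image of ψ is the subalgebra B of ℂ[r, s, s⁻¹] generated by r, r·s⁻¹, r·s²; consequently B ≅ ℂ[X,Y,Z]/(Z³ − XY²), the coordinate ring of the cubic ruled surface z³ = x y². -/
/-- The ring `ℂ[r, s, s⁻¹]` of polynomials in `r` that are Laurent polynomials
in `s`, realized as the monoid algebra of `ℕ × ℤ` over `ℂ`. -/
abbrev PolyLaurent : Type := AddMonoidAlgebra ℂ (ℕ × ℤ)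

/-- The monomial `rⁿ sᵐ` in `ℂ[r, s, s⁻¹]`. -/
noncomputable def mono (n : ℕ) (m : ℤ) : PolyLaurent :=
  AddMonoidAlgebra.single (n, m) 1

/-- The `ℂ`-algebra homomorphism `ψ : ℂ[X, Y, Z] → ℂ[r, s, s⁻¹]` determined by
`ψ(X) = r·s²`, `ψ(Y) = r·s⁻¹`, `ψ(Z) = r`. -/
noncomputable def psi : MvPolynomial (Fin 3) ℂ →ₐ[ℂ] PolyLaurent :=
  MvPolynomial.aeval ![mono 1 2, mono 1 (-1), mono 1 0]

/-- The principal ideal of `ℂ[X, Y, Z]` generated by `Z³ − X·Y²`. -/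
noncomputable def ruledIdeal : Ideal (MvPolynomial (Fin 3) ℂ) :=
  Ideal.span {MvPolynomial.X 2 ^ 3 - MvPolynomial.X 0 * MvPolynomial.X 1 ^ 2}

open MvPolynomial Finsupp

/-- weight map -/
def W (m : Fin 3 →₀ ℕ) : ℕ × ℤ := (m 0 + m 1 + m 2, 2 * (m 0 : ℤ) - m 1)

lemma psi_monomial (m : Fin 3 →₀ ℕ) (c : ℂ) :
    psi (monomial m c) = AddMonoidAlgebra.single (W m) c := by
  rw [psi, aeval_monomial, Finsupp.prod_fintype _ _ (fun i => pow_zero _), Fin.prod_univ_three]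
  simp only [Matrix.cons_val_zero, Matrix.cons_val_one, Matrix.head_cons, Matrix.cons_val_two,
    Matrix.tail_cons, mono, AddMonoidAlgebra.single_pow, AddMonoidAlgebra.single_mul_single]
  rw [Algebra.algebraMap_eq_smul_one]
  rw [smul_mul_assoc, one_mul, AddMonoidAlgebra.smul_single]
  congr 1
  · simp [W, Prod.ext_iff, smul_eq_mul]; ring
  · simp

lemma psi_eq (p : MvPolynomial (Fin 3) ℂ) :
    psi p = AddMonoidAlgebra.mapDomain W p := by
  induction p using MvPolynomial.induction_on' with
  | monomial m c => rw [psi_monomial]; exact (AddMonoidAlgebra.mapDomain_single).symm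
  | add p q hp hq => rw [map_add, hp, hq, AddMonoidAlgebra.mapDomain_add]

/-- reduced exponent -/
noncomputable def redE (m : Fin 3 →₀ ℕ) : Fin 3 →₀ ℕ :=
  Finsupp.single 0 (m 0 + m 2 / 3) + Finsupp.single 1 (m 1 + 2 * (m 2 / 3)) +
    Finsupp.single 2 (m 2 % 3)

lemma redE_apply (m : Fin 3 →₀ ℕ) :
    redE m 0 = m 0 + m 2 / 3 ∧ redE m 1 = m 1 + 2 * (m 2 / 3) ∧ redE m 2 = m 2 % 3 := by
  refine ⟨?_, ?_, ?_⟩ <;> simp [redE, Finsupp.single_apply]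

lemma W_redE (m : Fin 3 →₀ ℕ) : W (redE m) = W m := by
  obtain ⟨h0, h1, h2⟩ := redE_apply m
  have := Nat.div_add_mod (m 2) 3
  simp only [W, h0, h1, h2, Prod.ext_iff]
  constructor
  · omega
  · push_cast; omega

lemma W_injOn {m m' : Fin 3 →₀ ℕ} (h : m 2 ≤ 2) (h' : m' 2 ≤ 2) (hW : W m = W m') :
    m = m' := by
  rw [W, W, Prod.ext_iff] at hW
  obtain ⟨h1, h2⟩ := hW
  have e0 : m 0 = m' 0 := by omega
  have e1 : m 1 = m' 1 := by omega
  have e2 : m 2 = m' 2 := by omega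
  ext i
  fin_cases i
  exacts [e0, e1, e2]

lemma fin3_eq (m : Fin 3 →₀ ℕ) :
    m = Finsupp.single 0 (m 0) + Finsupp.single 1 (m 1) + Finsupp.single 2 (m 2) := by
  ext i; fin_cases i <;> simp [Finsupp.single_apply]

lemma monomial_sub_red_mem (m : Fin 3 →₀ ℕ) :
    monomial m (1 : ℂ) - monomial (redE m) 1 ∈ ruledIdeal := by
  obtain ⟨h0, h1, h2⟩ := redE_apply m
  have hm : monomial m (1 : ℂ) = X 0 ^ m 0 * X 1 ^ m 1 * X 2 ^ m 2 := by
    conv_lhs => rw [fin3_eq m]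
    rw [X_pow_eq_monomial, X_pow_eq_monomial, X_pow_eq_monomial, monomial_mul, monomial_mul]
    simp
  have hr : monomial (redE m) (1 : ℂ) =
      X 0 ^ (m 0 + m 2 / 3) * X 1 ^ (m 1 + 2 * (m 2 / 3)) * X 2 ^ (m 2 % 3) := by
    conv_lhs => rw [fin3_eq (redE m)]
    rw [h0, h1, h2, X_pow_eq_monomial, X_pow_eq_monomial, X_pow_eq_monomial, monomial_mul,
      monomial_mul]
    simp
  rw [hm, hr]
  rw [ruledIdeal, Ideal.mem_span_singleton]
  obtain ⟨q, hq⟩ := sub_dvd_pow_sub_pow ((X 2 : MvPolynomial (Fin 3) ℂ) ^ 3)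
    (X 0 * X 1 ^ 2) (m 2 / 3)
  refine ⟨X 0 ^ m 0 * X 1 ^ m 1 * X 2 ^ (m 2 % 3) * q, ?_⟩
  have hc : (X 2 : MvPolynomial (Fin 3) ℂ) ^ m 2 = (X 2 ^ 3) ^ (m 2 / 3) * X 2 ^ (m 2 % 3) := by
    rw [← pow_mul, ← pow_add]
    congr 1
    omega
  linear_combination (X 0 ^ m 0 * X 1 ^ m 1) * hc +
    (X 0 ^ m 0 * X 1 ^ m 1 * X 2 ^ (m 2 % 3)) * hq

lemma psi_gen : psi (X 2 ^ 3 - X 0 * X 1 ^ 2 : MvPolynomial (Fin 3) ℂ) = 0 := by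
  rw [map_sub, map_pow, map_mul, map_pow]
  simp only [psi, aeval_X, Matrix.cons_val_zero, Matrix.cons_val_one, Matrix.head_cons,
    Matrix.cons_val_two, Matrix.tail_cons]
  rw [mono, mono, mono, AddMonoidAlgebra.single_pow, AddMonoidAlgebra.single_pow,
    AddMonoidAlgebra.single_mul_single]
  norm_num

lemma ideal_le_ker : ruledIdeal ≤ RingHom.ker (psi : MvPolynomial (Fin 3) ℂ →+* PolyLaurent) := by
  rw [ruledIdeal, Ideal.span_le, Set.singleton_subset_iff]
  exact psi_gen

lemma ker_le_ideal (p : MvPolynomial (Fin 3) ℂ) (hp : psi p = 0) : p ∈ ruledIdeal := by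
  classical
  set q : MvPolynomial (Fin 3) ℂ :=
    ∑ m ∈ p.support, monomial (redE m) (coeff m p) with hq
  have hpq : p - q ∈ ruledIdeal := by
    have hrep : p - q = ∑ m ∈ p.support,
        (monomial m (coeff m p) - monomial (redE m) (coeff m p)) := by
      rw [Finset.sum_sub_distrib, support_sum_monomial_coeff, hq]
    rw [hrep]
    refine Ideal.sum_mem _ fun m _ => ?_
    have : monomial m (coeff m p) - monomial (redE m) (coeff m p)
        = coeff m p • (monomial m (1 : ℂ) - monomial (redE m) 1) := by
      rw [smul_sub, smul_monomial, smul_monomial, smul_eq_mul, mul_one]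
    rw [this, smul_eq_C_mul]
    exact Ideal.mul_mem_left _ _ (monomial_sub_red_mem m)
  have hpsiq : psi q = 0 := by
    have h1 : psi (p - q) = 0 := ideal_le_ker hpq
    rw [map_sub, hp, zero_sub, neg_eq_zero] at h1
    exact h1
  have hsupp : ∀ μ ∈ q.support, μ 2 ≤ 2 := by
    intro μ hμ
    obtain ⟨m, -, hm⟩ := Finset.mem_biUnion.1 (MvPolynomial.support_sum (hq ▸ hμ))
    have hsub := MvPolynomial.support_monomial_subset hm
    rw [Finset.mem_singleton] at hsub
    subst hsub
    have := (redE_apply m).2.2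
    omega
  have hq0 : q = 0 := by
    rw [psi_eq] at hpsiq
    ext μ
    by_cases hμ : μ ∈ q.support
    · have hS : (q.support : Set (Fin 3 →₀ ℕ)) ⊆ {ν : Fin 3 →₀ ℕ | ν 2 ≤ 2} := fun ν hν =>
        hsupp ν hν
      have hinj : Set.InjOn W {ν : Fin 3 →₀ ℕ | ν 2 ≤ 2} := fun a ha b hb h =>
        W_injOn ha hb h
      have := Finsupp.mapDomain_apply' {ν : Fin 3 →₀ ℕ | ν 2 ≤ 2} (AddMonoidAlgebra.coeff q) hS hinj (hsupp μ hμ)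
      have h' : Finsupp.mapDomain W (AddMonoidAlgebra.coeff q) = 0 := by
        simpa using congrArg AddMonoidAlgebra.coeff hpsiq
      rw [h'] at this
      exact this.symm
    · exact MvPolynomial.notMem_support_iff.1 hμ
  rw [hq0, sub_zero] at hpq
  exact hpq

lemma range_set_eq : Set.range ![mono 1 2, mono 1 (-1), mono 1 0] =
    {mono 1 0, mono 1 (-1), mono 1 2} := by
  ext x
  constructor
  · rintro ⟨i, rfl⟩
    fin_cases i <;> simp
  · rintro (rfl | rfl | rfl)
    exacts [⟨2, rfl⟩, ⟨1, rfl⟩, ⟨0, rfl⟩]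

lemma range_eq : psi.range = Algebra.adjoin ℂ {mono 1 0, mono 1 (-1), mono 1 2} := by
  rw [psi, ← Algebra.adjoin_range_eq_range_aeval, range_set_eq]


/-- **Coordinate ring of the cubic ruled surface.**
The kernel of `ψ` is the principal ideal generated by `Z³ − X·Y²`, and the
image of `ψ` is the subalgebra `B` of `ℂ[r, s, s⁻¹]` generated by `r`, `r·s⁻¹`,
`r·s²`; consequently `B ≅ ℂ[X,Y,Z]/(Z³ − XY²)`, the coordinate ring of the
cubic ruled surface `z³ = x y²`. -/
theorem ruled_surface_coordinate_ring :
    RingHom.ker (psi : MvPolynomial (Fin 3) ℂ →+* PolyLaurent) = ruledIdeal ∧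
    psi.range = Algebra.adjoin ℂ {mono 1 0, mono 1 (-1), mono 1 2} ∧
    Nonempty
      ((MvPolynomial (Fin 3) ℂ ⧸ ruledIdeal)
        ≃ₐ[ℂ] Algebra.adjoin ℂ {mono 1 0, mono 1 (-1), mono 1 2}) := by
  have hker : RingHom.ker (psi : MvPolynomial (Fin 3) ℂ →+* PolyLaurent) = ruledIdeal :=
    le_antisymm (fun p hp => ker_le_ideal p (RingHom.mem_ker.mp hp)) ideal_le_ker
  refine ⟨hker, range_eq, ?_⟩
  have h2 : RingHom.ker (psi.rangeRestrict : MvPolynomial (Fin 3) ℂ →+* psi.range) =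
      ruledIdeal := by
    rw [← hker]
    ext x
    rw [RingHom.mem_ker, RingHom.mem_ker]
    exact ⟨fun h => congrArg Subtype.val h, fun h => Subtype.ext h⟩
  exact ⟨(Ideal.quotientEquivAlgOfEq ℂ h2.symm).trans
    ((Ideal.quotientKerAlgEquivOfSurjective psi.rangeRestrict_surjective).trans
      (Subalgebra.equivOfEq _ _ range_eq))⟩
end

section
/- For integers n ≥ 0 and m, the monomial rⁿsᵐ lies in B if and only if −n ≤ m ≤ 2n and m ≠ 2n − 1; moreover B is the ℂ-linear span of these monomials. (Monomial description of the coordinate ring of the ruled surface z³ = xy², exhibiting the 'gaps' shown in Figure 3 of the paper.) -/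
/-- The coordinate ring `B` of the cubic ruled surface `z³ = x y²`: the
subalgebra of `ℂ[r, s, s⁻¹]` generated by `r`, `r·s⁻¹` and `r·s²`. -/
noncomputable def ruledB : Subalgebra ℂ PolyLaurent :=
  Algebra.adjoin ℂ {mono 1 0, mono 1 (-1), mono 1 2}

/-- The additive submonoid of exponents. -/
def ruledS : AddSubmonoid (ℕ × ℤ) :=
  AddSubmonoid.closure {(1, 0), (1, -1), (1, 2)}

lemma ruledS_bound {p : ℕ × ℤ} (hp : p ∈ ruledS) :
    -(p.1 : ℤ) ≤ p.2 ∧ p.2 ≤ 2 * (p.1 : ℤ) ∧ p.2 ≠ 2 * (p.1 : ℤ) - 1 := by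
  induction hp using AddSubmonoid.closure_induction with
  | mem x hx =>
    rcases hx with h | h | h <;> subst h <;> norm_num
  | zero => norm_num
  | add x y _ _ hx hy =>
    obtain ⟨x1, x2⟩ := x; obtain ⟨y1, y2⟩ := y
    simp only [Prod.fst_add, Prod.snd_add, Nat.cast_add] at *
    omega

lemma mem_ruledS_iff (n : ℕ) (m : ℤ) :
    (n, m) ∈ ruledS ↔
      (-(n : ℤ) ≤ m ∧ m ≤ 2 * (n : ℤ) ∧ m ≠ 2 * (n : ℤ) - 1) := by
  constructor
  · exact fun h => ruledS_bound h
  · rintro ⟨h1, h2, h3⟩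
    obtain ⟨i, j, k, hn, hm⟩ : ∃ i j k : ℕ, n = i + j + k ∧ m = 2 * k - j := by
      rcases le_or_gt m 0 with hm | hm
      · exact ⟨n - (-m).toNat, (-m).toNat, 0, by omega, by omega⟩
      · rcases Int.even_or_odd m with ⟨t, ht⟩ | ⟨t, ht⟩
        · exact ⟨n - m.toNat / 2, 0, m.toNat / 2, by omega, by omega⟩
        · exact ⟨n - (m.toNat + 1) / 2 - 1, 1, (m.toNat + 1) / 2, by omega, by omega⟩
    have heq : (n, m) = i • ((1, 0) : ℕ × ℤ) + j • (1, -1) + k • (1, 2) := by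
      simp only [Prod.smul_mk, Prod.mk_add_mk, Prod.mk.injEq, smul_eq_mul,
        nsmul_eq_mul]
      constructor
      · omega
      · omega
    rw [heq]
    refine add_mem (add_mem (nsmul_mem (AddSubmonoid.subset_closure ?_) i)
      (nsmul_mem (AddSubmonoid.subset_closure ?_) j))
      (nsmul_mem (AddSubmonoid.subset_closure ?_) k) <;> simp

lemma mono_mul (a b : ℕ) (c d : ℤ) :
    mono a c * mono b d = mono (a + b) (c + d) := by
  simp [mono, AddMonoidAlgebra.single_mul_single, Prod.mk_add_mk]

lemma mono_support (n : ℕ) (m : ℤ) : (mono n m).coeff.support = {(n, m)} :=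
  Finsupp.support_single_ne_zero _ one_ne_zero

/-- Set of monomials over `ruledS`. -/
def monoSet : Set PolyLaurent := {x | ∃ p ∈ ruledS, x = mono p.1 p.2}

lemma monoSet_eq :
    monoSet = {x : PolyLaurent | ∃ (n : ℕ) (m : ℤ),
      (-(n : ℤ) ≤ m ∧ m ≤ 2 * (n : ℤ) ∧ m ≠ 2 * (n : ℤ) - 1) ∧ x = mono n m} := by
  ext x
  constructor
  · rintro ⟨⟨n, m⟩, hp, rfl⟩
    exact ⟨n, m, (mem_ruledS_iff n m).1 hp, rfl⟩
  · rintro ⟨n, m, h, rfl⟩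
    exact ⟨(n, m), (mem_ruledS_iff n m).2 h, rfl⟩

lemma mono_mem_ruledB {p : ℕ × ℤ} (hp : p ∈ ruledS) : mono p.1 p.2 ∈ ruledB := by
  induction hp using AddSubmonoid.closure_induction with
  | mem x hx =>
    rcases hx with h | h | h <;> subst h <;>
      exact Algebra.subset_adjoin (by simp [ruledB])
  | zero => exact one_mem _
  | add x y _ _ hx hy =>
    have : mono (x + y).1 (x + y).2 = mono x.1 x.2 * mono y.1 y.2 := by
      rw [mono_mul, Prod.fst_add, Prod.snd_add]
    rw [this]
    exact mul_mem hx hy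

lemma ruledB_submodule_eq :
    Subalgebra.toSubmodule ruledB = Submodule.span ℂ monoSet := by
  apply le_antisymm
  · -- span is a subalgebra containing the generators
    have h1 : (1 : PolyLaurent) ∈ Submodule.span ℂ monoSet := by
      apply Submodule.subset_span
      exact ⟨0, zero_mem _, rfl⟩
    have hmul : ∀ x y : PolyLaurent, x ∈ Submodule.span ℂ monoSet →
        y ∈ Submodule.span ℂ monoSet → x * y ∈ Submodule.span ℂ monoSet := by
      intro x y hx hy
      have hle : Submodule.span ℂ monoSet * Submodule.span ℂ monoSet ≤
          Submodule.span ℂ monoSet := by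
        rw [Submodule.span_mul_span]
        apply Submodule.span_le.2
        rintro z ⟨a, ⟨p, hp, rfl⟩, b, ⟨q, hq, rfl⟩, rfl⟩
        apply Submodule.subset_span
        show mono p.1 p.2 * mono q.1 q.2 ∈ monoSet
        rw [mono_mul]
        exact ⟨p + q, add_mem hp hq, rfl⟩
      exact hle (Submodule.mul_mem_mul hx hy)
    have hB : ruledB ≤ (Submodule.span ℂ monoSet).toSubalgebra h1 hmul := by
      apply Algebra.adjoin_le
      rintro x (h | h | h) <;> subst h
      · exact Submodule.subset_span
          ⟨((1, 0) : ℕ × ℤ), AddSubmonoid.subset_closure (by simp), rfl⟩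
      · exact Submodule.subset_span
          ⟨((1, -1) : ℕ × ℤ), AddSubmonoid.subset_closure (by simp), rfl⟩
      · exact Submodule.subset_span
          ⟨((1, 2) : ℕ × ℤ), AddSubmonoid.subset_closure (by simp), rfl⟩
    exact hB
  · apply Submodule.span_le.2
    rintro x ⟨p, hp, rfl⟩
    exact mono_mem_ruledB hp

/-- **Monomial description of the coordinate ring of the ruled surface
`z³ = xy²`.**
For `n ≥ 0` and `m ∈ ℤ`, the monomial `rⁿsᵐ` lies in `B` if and only if
`−n ≤ m ≤ 2n` and `m ≠ 2n − 1`; moreover `B` is the `ℂ`-linear span of these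
monomials. -/
theorem ruled_surface_monomials :
    (∀ (n : ℕ) (m : ℤ),
      mono n m ∈ ruledB ↔
        (-(n : ℤ) ≤ m ∧ m ≤ 2 * (n : ℤ) ∧ m ≠ 2 * (n : ℤ) - 1)) ∧
    Subalgebra.toSubmodule ruledB =
      Submodule.span ℂ {x : PolyLaurent | ∃ (n : ℕ) (m : ℤ),
        (-(n : ℤ) ≤ m ∧ m ≤ 2 * (n : ℤ) ∧ m ≠ 2 * (n : ℤ) - 1) ∧
        x = mono n m} := by
  have hspan := ruledB_submodule_eq
  constructor
  · intro n m
    rw [← mem_ruledS_iff]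
    constructor
    · intro h
      have hx : mono n m ∈ Submodule.span ℂ monoSet := by
        rw [← hspan]; exact h
      have hsupp : Submodule.span ℂ monoSet ≤
          AddMonoidAlgebra.supported ℂ ℂ (ruledS : Set (ℕ × ℤ)) := by
        apply Submodule.span_le.2
        rintro x ⟨p, hp, rfl⟩
        intro q hq
        have : (mono p.1 p.2).coeff.support = {(p.1, p.2)} := mono_support p.1 p.2
        change q ∈ (mono p.1 p.2).coeff.support at hq
        rw [this] at hq
        simp only [Finset.mem_singleton] at hq
        subst hq
        simpa using hp
      have hmem : (n, m) ∈ (mono n m).coeff.support := by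
        rw [mono_support]; exact Finset.mem_singleton_self _
      exact hsupp hx hmem
    · exact fun h => mono_mem_ruledB (p := (n, m)) h
  · rw [hspan, monoSet_eq]
end

section
/- For q ∈ ℂ[u, t, t⁻¹], the operator q·∂_u maps A into A if and only if q ∈ u·A := {u·a : a ∈ A}. (Part 1 of the Lemma on derivations of the cone; since q = (q·∂_u)(u), any rational function q for which q·∂_u preserves A automatically lies in A ⊆ ℂ[u, t, t⁻¹], so no generality is lost.) -/
/-- The coordinate ring `A` of the double cone `z² = x² + y²`: the subalgebra
of `ℂ[u, t, t⁻¹]` generated by `u`, `u·t` and `u·t⁻¹` (after the complex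
rotation `x+iy, x−iy, z ↦ ut, ut⁻¹, u`). -/
noncomputable def coneA : Subalgebra ℂ PolyLaurent :=
  Algebra.adjoin ℂ {mono 1 0, mono 1 1, mono 1 (-1)}

/-- The partial derivative `∂_u` of `ℂ[u, t, t⁻¹]`, sending `uⁿtᵐ` to
`n·u^{n−1}tᵐ`. -/
noncomputable def du : PolyLaurent →ₗ[ℂ] PolyLaurent :=
  (AddMonoidAlgebra.coeffLinearEquiv ℂ).symm.toLinearMap ∘ₗ
    (Finsupp.lsum ℂ fun (p : ℕ × ℤ) => (p.1 : ℂ) • Finsupp.lsingle (p.1 - 1, p.2)) ∘ₗ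
    (AddMonoidAlgebra.coeffLinearEquiv ℂ).toLinearMap

/-- A general single term, with the ambient type forced to `PolyLaurent`. -/
noncomputable def sing (p : ℕ × ℤ) (c : ℂ) : PolyLaurent := AddMonoidAlgebra.single p c

lemma sing_eq (p : ℕ × ℤ) (c : ℂ) : (sing p c).coeff = Finsupp.single p c := rfl

lemma sing_eq_smul_mono (p : ℕ × ℤ) (c : ℂ) : sing p c = c • mono p.1 p.2 := by
  obtain ⟨n, m⟩ := p
  simp [sing, mono, Finsupp.smul_single]

lemma mono_mul_mono (a c : ℕ) (b d : ℤ) : mono a b * mono c d = mono (a + c) (b + d) := by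
  simp [mono, AddMonoidAlgebra.single_mul_single, Prod.mk_add_mk]

lemma mono_pow (e : ℤ) (k : ℕ) : (mono 1 e) ^ k = mono k (k * e) := by
  induction k with
  | zero => simp [mono]; rfl
  | succ n ih =>
    rw [pow_succ, ih, mono_mul_mono]
    congr 1
    push_cast; ring

/-- The "support" description of the cone algebra. -/
noncomputable def okA : Subalgebra ℂ PolyLaurent where
  carrier := {f | ∀ p ∈ f.coeff.support, p.2.natAbs ≤ p.1}
  add_mem' := by
    intro a b ha hb p hp
    rcases Finset.mem_union.1 (Finsupp.support_add (g₁ := a.coeff) (g₂ := b.coeff) hp) with h | h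
    · exact ha p h
    · exact hb p h
  mul_mem' := by
    intro a b ha hb p hp
    rcases Finset.mem_add.1 (AddMonoidAlgebra.support_coeff_mul_subset a b hp) with ⟨x, hx, y, hy, rfl⟩
    have := ha x hx; have := hb y hy
    simp only [Prod.fst_add, Prod.snd_add]
    omega
  algebraMap_mem' := by
    intro c p hp
    have : p ∈ ({((0 : ℕ), (0 : ℤ))} : Finset _) := by
      simpa [Prod.mk_zero_zero] using Finsupp.support_single_subset hp
    simp only [Finset.mem_singleton] at this
    subst this; simp

lemma sing_mem_okA {p : ℕ × ℤ} (c : ℂ) (h : p.2.natAbs ≤ p.1) : sing p c ∈ okA := by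
  intro r hr
  rw [sing_eq] at hr
  have : r ∈ ({p} : Finset _) := Finsupp.support_single_subset hr
  simp only [Finset.mem_singleton] at this
  subst this; exact h

lemma du_sing (p : ℕ × ℤ) (c : ℂ) :
    du (sing p c) = (p.1 : ℂ) • sing (p.1 - 1, p.2) c := by
  show (AddMonoidAlgebra.coeffLinearEquiv ℂ).symm (Finsupp.lsum ℂ
    (fun (p : ℕ × ℤ) => (p.1 : ℂ) • Finsupp.lsingle (p.1 - 1, p.2)) (Finsupp.single p c)) = _
  rw [Finsupp.lsum_single]
  rfl

lemma mono_mem_coneA {n : ℕ} {m : ℤ} (h : m.natAbs ≤ n) : mono n m ∈ coneA := by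
  have h0 : mono 1 0 ∈ coneA := Algebra.subset_adjoin (by simp)
  have h1 : mono 1 1 ∈ coneA := Algebra.subset_adjoin (by simp)
  have h2 : mono 1 (-1) ∈ coneA := Algebra.subset_adjoin (by simp)
  rcases le_or_gt 0 m with hm | hm
  · have : mono n m = (mono 1 1) ^ m.toNat * (mono 1 0) ^ (n - m.toNat) := by
      rw [mono_pow, mono_pow, mono_mul_mono]
      congr 1 <;> omega
    rw [this]; exact mul_mem (pow_mem h1 _) (pow_mem h0 _)
  · have : mono n m = (mono 1 (-1)) ^ m.natAbs * (mono 1 0) ^ (n - m.natAbs) := by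
      rw [mono_pow, mono_pow, mono_mul_mono]
      congr 1 <;> omega
    rw [this]; exact mul_mem (pow_mem h2 _) (pow_mem h0 _)

lemma sum_sing (f : PolyLaurent) : (∑ p ∈ f.coeff.support, sing p (f.coeff p)) = f := by
  conv_rhs => rw [← AddMonoidAlgebra.sum_coeff_single f]
  rfl

lemma coneA_eq_okA : coneA = okA := by
  apply le_antisymm
  · apply Algebra.adjoin_le
    intro x hx
    rcases hx with h | h | h <;> subst h <;> exact sing_mem_okA 1 (by norm_num)
  · intro f hf
    rw [← sum_sing f]
    refine Subalgebra.sum_mem _ fun p hp => ?_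
    rw [sing_eq_smul_mono]
    exact Subalgebra.smul_mem _ (mono_mem_coneA (hf p hp)) _

lemma u_mul_du_sing (p : ℕ × ℤ) (c : ℂ) :
    mono 1 0 * du (sing p c) = (p.1 : ℂ) • sing p c := by
  rw [du_sing]
  obtain ⟨n, m⟩ := p
  rcases Nat.eq_zero_or_pos n with rfl | hn
  · simp
  · rw [mul_smul_comm]
    congr 1
    rw [sing_eq_smul_mono, mul_smul_comm, mono_mul_mono]
    have e1 : 1 + (n - 1) = n := by omega
    have e2 : (0 : ℤ) + m = m := by ring
    rw [e1, e2, sing_eq_smul_mono]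

lemma u_mul_du_mem {b : PolyLaurent} (hb : b ∈ coneA) : mono 1 0 * du b ∈ coneA := by
  rw [coneA_eq_okA] at hb ⊢
  have hrw : mono 1 0 * du b = ∑ p ∈ b.coeff.support, (p.1 : ℂ) • sing p (b.coeff p) := by
    conv_lhs => rw [← sum_sing b]
    rw [map_sum, Finset.mul_sum]
    exact Finset.sum_congr rfl fun p _ => u_mul_du_sing p (b.coeff p)
  rw [hrw]
  exact Subalgebra.sum_mem _ fun p hp =>
    Subalgebra.smul_mem _ (sing_mem_okA _ (hb p hp)) _

/-- **Derivations of the cone, part 1.**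
For `q ∈ ℂ[u, t, t⁻¹]`, the operator `q·∂_u` maps `A` into `A` if and only if
`q ∈ u·A`. -/
theorem cone_derivations_du (q : PolyLaurent) :
    (∀ a ∈ coneA, q * du a ∈ coneA) ↔ (∃ a ∈ coneA, q = mono 1 0 * a) := by
  constructor
  · intro h
    have key : ∀ j : ℤ, j.natAbs ≤ 2 → ∀ p ∈ q.coeff.support, (p.2 + j).natAbs ≤ p.1 + 1 := by
      intro j hj p hp
      have ha : mono 2 j ∈ coneA := mono_mem_coneA hj
      have hd : du (mono 2 j) = (2 : ℂ) • mono 1 j := by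
        have : mono 2 j = sing (2, j) 1 := rfl
        rw [this, du_sing]
        norm_num
        rfl
      have hq : q * mono 1 j ∈ coneA := by
        have h2 := h _ ha
        rw [hd, mul_smul_comm] at h2
        have h3 := Subalgebra.smul_mem _ h2 ((2 : ℂ)⁻¹)
        rwa [smul_smul, inv_mul_cancel₀ (by norm_num), one_smul] at h3
      rw [coneA_eq_okA] at hq
      have hsupp : (q * mono 1 j).coeff.support = q.coeff.support.map (addRightEmbedding ((1 : ℕ), j)) :=
        AddMonoidAlgebra.support_coeff_mul_single q 1 (by simp) _
      have hmem : p + ((1 : ℕ), j) ∈ (q * mono 1 j).coeff.support := by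
        rw [hsupp, Finset.mem_map]
        exact ⟨p, hp, rfl⟩
      have := hq _ hmem
      simpa using this
    have main : ∀ p ∈ q.coeff.support, 1 ≤ p.1 ∧ p.2.natAbs ≤ p.1 - 1 := by
      intro p hp
      have h2 := key 2 (by norm_num) p hp
      have hn2 := key (-2) (by norm_num) p hp
      omega
    refine ⟨∑ p ∈ q.coeff.support, sing ((p.1 - 1 : ℕ), p.2) (q.coeff p), ?_, ?_⟩
    · rw [coneA_eq_okA]
      exact Subalgebra.sum_mem _ fun p hp => sing_mem_okA _ (main p hp).2
    · rw [Finset.mul_sum]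
      conv_lhs => rw [← sum_sing q]
      refine Finset.sum_congr rfl fun p hp => ?_
      have h1 := (main p hp).1
      obtain ⟨n, m⟩ := p
      have e1 : 1 + (n - 1) = n := by omega
      calc sing (n, m) (q.coeff (n, m)) = (q.coeff (n, m)) • mono n m := sing_eq_smul_mono _ _
        _ = mono 1 0 * sing (n - 1, m) (q.coeff (n, m)) := by
            rw [sing_eq_smul_mono, mul_smul_comm, mono_mul_mono]
            simp [e1]
  · rintro ⟨a, ha, rfl⟩
    intro b hb
    have : mono 1 0 * a * du b = a * (mono 1 0 * du b) := by ring
    rw [this]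
    exact mul_mem ha (u_mul_du_mem hb)
end
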